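/- Let h(S) = (Σ_{i∈S} a_i)/(b0 + Σ_{i∈S} b_i) with b0 > 0, a_i ≥ 0, b_i > 0, and suppose h is submodular over all subsets of N. Let n ∈ N be an element minimizing a_i/b_i over i ∈ N. Then for every S ⊆ N with n ∈ S and every j ∉ S, we have h(S) ≤ h(S∪{j}); i.e., h is monotone nondecreasing on the family of sets containing n. -/
import Mathlib

private lemma arith_aux (A B an bn aj bj : ℝ) (hA : 0 ≤ A) (hB : 0 < B)
    (han : 0 ≤ an) (hbn : 0 < bn) (haj : 0 ≤ aj) (hbj : 0 < bj)
    (hc : an * bj ≤ aj * bn)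
    (key : (an + (aj + A)) / (B + (bn + bj)) - (aj + A) / (B + bj) ≤
      (an + A) / (B + bn) - A / B) :
    (an + A) / (B + bn) ≤ (aj + (an + A)) / (B + (bj + bn)) := by
  have hD1 : 0 < B + (bn + bj) := by linarith
  have hD2 : 0 < B + bj := by linarith
  have hD3 : 0 < B + bn := by linarith
  have hD4 : 0 < B + (bj + bn) := by linarith
  rw [div_sub_div _ _ (ne_of_gt hD1) (ne_of_gt hD2),
    div_sub_div _ _ (ne_of_gt hD3) (ne_of_gt hB),
    div_le_div_iff₀ (by positivity) (by positivity)] at key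
  rw [div_le_div_iff₀ hD3 hD4]
  have hid1 : ((an + A) * B - (B + bn) * A) * ((B + (bn + bj)) * (B + bj)) -
      ((an + (aj + A)) * (B + bj) - (B + (bn + bj)) * (aj + A)) * ((B + bn) * B) =
      (B*an - A*bn)*bj*(2*B+bn+bj) + (aj*bn - an*bj)*B*(B+bn) := by ring
  have star : 0 ≤ (B*an - A*bn)*bj*(2*B+bn+bj) + (aj*bn - an*bj)*B*(B+bn) := by
    linarith [key, hid1]
  have hc' : 0 ≤ aj*bn - an*bj := by linarith
  have h2 : 0 ≤ (aj*bn-an*bj)*((B+bn)*(B+bn+bj)) :=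
    mul_nonneg hc' (by positivity)
  have hid2 : (bj*(B*an-A*bn) + (aj*bn-an*bj)*(B+bn))*(2*B+bn+bj) =
      ((B*an - A*bn)*bj*(2*B+bn+bj) + (aj*bn - an*bj)*B*(B+bn))
        + (aj*bn-an*bj)*((B+bn)*(B+bn+bj)) := by ring
  have hpos : (0:ℝ) < 2*B+bn+bj := by linarith
  have G' : 0 ≤ bj*(B*an-A*bn) + (aj*bn-an*bj)*(B+bn) := by
    nlinarith [star, h2, hid2, hpos]
  have hid3 : bn*((aj+(an+A))*(B+bn) - (an+A)*(B+(bj+bn))) =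
      bj*(B*an-A*bn) + (aj*bn-an*bj)*(B+bn) := by ring
  nlinarith [G', hid3, hbn]

theorem stmt_6 {ι : Type*} [DecidableEq ι] (N : Finset ι) (a b : ι → ℝ) (b0 : ℝ)
    (hb0 : 0 < b0) (ha : ∀ i ∈ N, 0 ≤ a i) (hb : ∀ i ∈ N, 0 < b i)
    (h : Finset ι → ℝ)
    (hdef : ∀ S : Finset ι, h S = (∑ i ∈ S, a i) / (b0 + ∑ i ∈ S, b i))
    (hsub : ∀ S : Finset ι, S ⊆ N → ∀ i ∈ N, ∀ j ∈ N, i ∉ S → j ∉ S → i ≠ j →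
      h (insert i (insert j S)) - h (insert j S) ≤ h (insert i S) - h S)
    (n : ι) (hn : n ∈ N) (hnmin : ∀ i ∈ N, a n / b n ≤ a i / b i) :
    ∀ S : Finset ι, S ⊆ N → n ∈ S → ∀ j ∈ N, j ∉ S → h S ≤ h (insert j S) := by
  intro S hSN hnS j hjN hjS
  set S' := S.erase n with hS'def
  have hnS' : n ∉ S' := Finset.notMem_erase n S
  have hjS' : j ∉ S' := fun hm => hjS (Finset.mem_of_mem_erase hm)
  have hins : insert n S' = S := Finset.insert_erase hnS
  have hS'N : S' ⊆ N := (Finset.erase_subset n S).trans hSN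
  have hne : n ≠ j := fun e => hjS (e ▸ hnS)
  have key := hsub S' hS'N n hn j hjN hnS' hjS' hne
  have hjins : j ∉ insert n S' := by
    simp [Finset.mem_insert, hne.symm, hjS']
  have hnins : n ∉ insert j S' := by
    simp [Finset.mem_insert, hne, hnS']
  have hA : 0 ≤ ∑ i ∈ S', a i := Finset.sum_nonneg fun i hi => ha i (hS'N hi)
  have hB : 0 < b0 + ∑ i ∈ S', b i := by
    have : 0 ≤ ∑ i ∈ S', b i := Finset.sum_nonneg fun i hi => (hb i (hS'N hi)).le
    linarith
  have han : 0 ≤ a n := ha n hn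
  have hbn : 0 < b n := hb n hn
  have haj : 0 ≤ a j := ha j hjN
  have hbj : 0 < b j := hb j hjN
  have hc : a n * b j ≤ a j * b n := by
    have := hnmin j hjN
    rw [div_le_div_iff₀ hbn hbj] at this
    linarith
  simp only [hdef, Finset.sum_insert hnins, Finset.sum_insert hjS',
    Finset.sum_insert hnS'] at key
  rw [← hins, hdef, hdef]
  simp only [Finset.sum_insert hjins, Finset.sum_insert hnS']
  have main := arith_aux (∑ i ∈ S', a i) (b0 + ∑ i ∈ S', b i) (a n) (b n) (a j) (b j)
    hA hB han hbn haj hbj hc (by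
      have e1 : b0 + (b n + (b j + ∑ i ∈ S', b i)) =
          (b0 + ∑ i ∈ S', b i) + (b n + b j) := by ring
      have e2 : b0 + (b j + ∑ i ∈ S', b i) = (b0 + ∑ i ∈ S', b i) + b j := by ring
      have e3 : b0 + (b n + ∑ i ∈ S', b i) = (b0 + ∑ i ∈ S', b i) + b n := by ring
      rw [e1, e2, e3] at key
      convert key using 2 <;> ring)
  have e4 : b0 + (b n + ∑ i ∈ S', b i) = (b0 + ∑ i ∈ S', b i) + b n := by ring
  have e5 : b0 + (b j + (b n + ∑ i ∈ S', b i)) =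
      (b0 + ∑ i ∈ S', b i) + (b j + b n) := by ring
  rw [e4, e5]
  convert main using 2 <;> ring
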